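/- For every real c > 0 there exist a positive integer n and a union-closed family F ⊆ P({1,…,n}) with F ≠ ∅ and F ≠ {∅} such that the average overlap density of F is strictly less than c. (This disproves the conjecture that average overlap densities of union-closed families are bounded below by an absolute positive constant.) -/

import Mathlib

open Finset

/-- A family of finite sets is union-closed if it contains the union of any two of
its members. -/
def UnionClosed {α : Type*} [DecidableEq α] (F : Finset (Finset α)) : Prop :=
  ∀ A ∈ F, ∀ B ∈ F, A ∪ B ∈ F

/-- The abundance of `x` with respect to a family `F`. -/
noncomputable def abundance {α : Type*} [DecidableEq α] (F : Finset (Finset α)) (x : α) : ℝ :=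
  ((F.filter (fun A => x ∈ A)).card : ℝ) / (F.card : ℝ)

/-- The average overlap density of `F`. -/
noncomputable def AOD {α : Type*} [DecidableEq α] (F : Finset (Finset α)) : ℝ :=
  (1 / (((F.erase ∅).card : ℝ))) *
    ∑ A ∈ F.erase ∅, (1 / (A.card : ℝ)) * ∑ x ∈ A, abundance F x

namespace AODAux

/-! ### Generic transport of the quantities along an embedding -/

section Transport

variable {α β : Type*} [DecidableEq α] [DecidableEq β]

lemma abundance_image_map (e : α ↪ β) (F : Finset (Finset α)) (x : α) :
    abundance (F.image (Finset.map e)) (e x) = abundance F x := by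
  have hinj : Function.Injective (Finset.map e) := Finset.map_injective e
  unfold abundance
  rw [Finset.card_image_of_injective _ hinj, Finset.filter_image,
    Finset.card_image_of_injective _ hinj]
  have hfilter : (F.filter fun A => e x ∈ A.map e) = F.filter fun A => x ∈ A :=
    Finset.filter_congr (by intro A _; simp [Finset.mem_map'])
  rw [hfilter]

lemma AOD_image_map (e : α ↪ β) (F : Finset (Finset α)) :
    AOD (F.image (Finset.map e)) = AOD F := by
  have hinj : Function.Injective (Finset.map e) := Finset.map_injective e
  have herase : (F.image (Finset.map e)).erase ∅ = (F.erase ∅).image (Finset.map e) := by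
    have := Finset.image_erase hinj F (∅ : Finset α)
    rw [Finset.map_empty] at this
    exact this.symm
  unfold AOD
  rw [herase, Finset.card_image_of_injective _ hinj,
    Finset.sum_image (fun A _ B _ h => hinj h)]
  congr 1
  apply Finset.sum_congr rfl
  intro A _
  rw [Finset.card_map, Finset.sum_map]
  congr 1
  apply Finset.sum_congr rfl
  intro x _
  exact abundance_image_map e F x

lemma unionClosed_image_map (e : α ↪ β) (F : Finset (Finset α)) (h : UnionClosed F) :
    UnionClosed (F.image (Finset.map e)) := by
  intro A hA B hB
  obtain ⟨A', hA', rfl⟩ := Finset.mem_image.1 hA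
  obtain ⟨B', hB', rfl⟩ := Finset.mem_image.1 hB
  rw [← Finset.map_union]
  exact Finset.mem_image_of_mem _ (h A' hA' B' hB')

end Transport

/-! ### Numeric helper lemmas -/

/-- telescoping ingredient: `j^(d+1) + (d+1) j^d ≤ (j+1)^(d+1)`. -/
lemma tele (d j : ℕ) : j ^ (d + 1) + (d + 1) * j ^ d ≤ (j + 1) ^ (d + 1) := by
  induction d with
  | zero => simp
  | succ d ih =>
    have : (j + 1) ^ (d + 2) = (j + 1) ^ (d + 1) * (j + 1) := by ring
    rw [this]
    calc j ^ (d + 2) + (d + 2) * j ^ (d + 1)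
        ≤ (j ^ (d + 1) + (d + 1) * j ^ d) * (j + 1) := by
          have h1 : j ^ (d + 2) = j ^ d * j * j := by ring
          have h2 : j ^ (d + 1) = j ^ d * j := by ring
          rw [h1, h2]
          nlinarith [Nat.zero_le (j ^ d)]
      _ ≤ (j + 1) ^ (d + 1) * (j + 1) := Nat.mul_le_mul_right _ ih

lemma sum_pow_le (d m : ℕ) : (d + 1) * ∑ j ∈ Finset.range m, j ^ d ≤ m ^ (d + 1) := by
  induction m with
  | zero => simp
  | succ m ih =>
    rw [Finset.sum_range_succ, Nat.mul_add]
    calc (d + 1) * ∑ j ∈ Finset.range m, j ^ d + (d + 1) * m ^ d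
        ≤ m ^ (d + 1) + (d + 1) * m ^ d := Nat.add_le_add_right ih _
      _ ≤ (m + 1) ^ (d + 1) := tele d m

/-- Cardinality of an initial segment of `Fin N`. -/
lemma card_filter_val_lt (N B : ℕ) (h : B ≤ N) :
    ((Finset.univ : Finset (Fin N)).filter fun u : Fin N => (u : ℕ) < B).card = B := by
  rcases eq_or_lt_of_le h with heq | hlt
  · subst heq
    have huniv : ((Finset.univ : Finset (Fin B)).filter fun u : Fin B => (u : ℕ) < B) = Finset.univ := by
      apply Finset.filter_true_of_mem
      intro u _
      exact u.isLt
    rw [huniv, Finset.card_univ, Fintype.card_fin]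
  · have : ((Finset.univ : Finset (Fin N)).filter fun u : Fin N => (u : ℕ) < B)
        = Finset.Iio (⟨B, hlt⟩ : Fin N) := by
      ext u
      simp [Fin.lt_def]
    rw [this, Fin.card_Iio]

end AODAux


namespace AODConstruction

open AODAux

/-- The base of the geometric block sizes. -/
def K (q : ℕ) : ℕ := 2 * q * q + 1

lemma one_le_K (q : ℕ) : 1 ≤ K q := Nat.le_add_left 1 (2 * q * q)

lemma two_le_K {q : ℕ} (hq : 1 ≤ q) : 2 ≤ K q := by
  have h1 : 1 ≤ q * q := Nat.mul_le_mul hq hq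
  unfold K
  nlinarith

lemma Kpow_mono (q : ℕ) : Monotone fun e : ℕ => K q ^ e :=
  fun _ _ h => Nat.pow_le_pow_right (one_le_K q) h

/-- The member of the family indexed by `a`. -/
def S (q : ℕ) (a : Fin q → Fin q) : Finset (Fin q × Fin (K q ^ q)) :=
  Finset.univ.filter fun x : Fin q × Fin (K q ^ q) => (x.2 : ℕ) < K q ^ (a x.1 : ℕ)

/-- The family. -/
def Fam (q : ℕ) : Finset (Finset (Fin q × Fin (K q ^ q))) := Finset.univ.image (S q)

lemma mem_S {q : ℕ} {a : Fin q → Fin q} {x : Fin q × Fin (K q ^ q)} :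
    x ∈ S q a ↔ (x.2 : ℕ) < K q ^ (a x.1 : ℕ) := by simp [S]

lemma card_S (q : ℕ) (a : Fin q → Fin q) :
    (S q a).card = ∑ t : Fin q, K q ^ (a t : ℕ) := by
  rw [S, Finset.card_filter, Fintype.sum_prod_type]
  apply Finset.sum_congr rfl
  intro t _
  rw [← Finset.card_filter]
  exact card_filter_val_lt _ _ (Nat.pow_le_pow_right (one_le_K q) (a t).isLt.le)

lemma coe_inf {q : ℕ} (x y : Fin q) : ((x ⊓ y : Fin q) : ℕ) = min (x : ℕ) (y : ℕ) := by
  rcases le_total x y with h | h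
  · rw [inf_eq_left.2 h, (min_eq_left (by exact_mod_cast h) : min (x:ℕ) (y:ℕ) = x)]
  · rw [inf_eq_right.2 h, (min_eq_right (by exact_mod_cast h) : min (x:ℕ) (y:ℕ) = y)]

lemma coe_sup {q : ℕ} (x y : Fin q) : ((x ⊔ y : Fin q) : ℕ) = max (x : ℕ) (y : ℕ) := by
  rcases le_total x y with h | h
  · rw [sup_eq_right.2 h, (max_eq_right (by exact_mod_cast h) : max (x:ℕ) (y:ℕ) = y)]
  · rw [sup_eq_left.2 h, (max_eq_left (by exact_mod_cast h) : max (x:ℕ) (y:ℕ) = x)]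

lemma inter_S (q : ℕ) (a b : Fin q → Fin q) : S q a ∩ S q b = S q (a ⊓ b) := by
  ext x
  simp only [Finset.mem_inter, mem_S, Pi.inf_apply, coe_inf]
  rw [(Kpow_mono q).map_min, lt_min_iff]

lemma union_S (q : ℕ) (a b : Fin q → Fin q) : S q a ∪ S q b = S q (a ⊔ b) := by
  ext x
  simp only [Finset.mem_union, mem_S, Pi.sup_apply, coe_sup]
  rw [(Kpow_mono q).map_max, lt_max_iff]

lemma S_injective {q : ℕ} (hq : 1 ≤ q) : Function.Injective (S q) := by
  have h2 : 2 ≤ K q := two_le_K hq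
  have key : ∀ a b : Fin q → Fin q, S q a = S q b → ∀ t, (a t : ℕ) ≤ (b t : ℕ) := by
    intro a b hab t
    by_contra hlt
    push_neg at hlt
    have hxlt : K q ^ ((b t) : ℕ) < K q ^ q :=
      Nat.pow_lt_pow_right (by omega) (b t).isLt
    set x : Fin q × Fin (K q ^ q) := (t, ⟨K q ^ ((b t) : ℕ), hxlt⟩) with hx
    have hxa : x ∈ S q a := by
      rw [mem_S]
      exact Nat.pow_lt_pow_right (by omega) hlt
    have hxb : x ∉ S q b := by
      rw [mem_S]
      exact lt_irrefl _
    rw [hab] at hxa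
    exact hxb hxa
  intro a b hab
  funext t
  exact Fin.val_injective (le_antisymm (key a b hab t) (key b a hab.symm t))

lemma S_nonempty {q : ℕ} (hq : 1 ≤ q) (a : Fin q → Fin q) : (S q a).Nonempty := by
  refine ⟨((⟨0, hq⟩ : Fin q), (⟨0, Nat.pow_pos (by have := one_le_K q; omega)⟩ :
    Fin (K q ^ q))), ?_⟩
  rw [mem_S]
  exact Nat.pow_pos (one_le_K q)

lemma empty_not_mem_Fam {q : ℕ} (hq : 1 ≤ q) : (∅ : Finset (Fin q × Fin (K q ^ q))) ∉ Fam q := by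
  rw [Fam]
  intro h
  obtain ⟨a, _, ha⟩ := Finset.mem_image.1 h
  exact (S_nonempty hq a).ne_empty ha

lemma card_Fam {q : ℕ} (hq : 1 ≤ q) : (Fam q).card = q ^ q := by
  rw [Fam, Finset.card_image_of_injective _ (S_injective hq), Finset.card_univ,
    Fintype.card_fun, Fintype.card_fin]

lemma unionClosed_Fam (q : ℕ) : UnionClosed (Fam q) := by
  intro A hA B hB
  obtain ⟨a, _, rfl⟩ := Finset.mem_image.1 hA
  obtain ⟨b, _, rfl⟩ := Finset.mem_image.1 hB
  rw [union_S]
  exact Finset.mem_image_of_mem _ (Finset.mem_univ _)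

/-! ### Counting within the family -/

lemma sum_pi_apply {q : ℕ} (g : Fin q → ℕ) (t : Fin q) :
    ∑ b : Fin q → Fin q, g (b t) = q ^ (q - 1) * ∑ v : Fin q, g v := by
  classical
  have h1 : ∑ b : Fin q → Fin q, g (b t)
      = ∑ p : Fin q × ({ j : Fin q // j ≠ t } → Fin q), g p.1 :=
    Fintype.sum_equiv (Equiv.funSplitAt t (Fin q)) _ _ (fun b => rfl)
  have hcard : Fintype.card ({ j : Fin q // j ≠ t } → Fin q) = q ^ (q - 1) := by
    rw [Fintype.card_fun, Fintype.card_fin]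
    congr 1
    rw [Fintype.card_subtype_compl, Fintype.card_subtype_eq, Fintype.card_fin]
  rw [h1, Fintype.sum_prod_type]
  calc ∑ v : Fin q, ∑ _h : { j : Fin q // j ≠ t } → Fin q, g v
      = ∑ v : Fin q, (Fintype.card ({ j : Fin q // j ≠ t } → Fin q)) * g v := by
        apply Finset.sum_congr rfl
        intro v _
        rw [Finset.sum_const, Finset.card_univ, smul_eq_mul]
    _ = q ^ (q - 1) * ∑ v, g v := by rw [← Finset.mul_sum, hcard]

/-- The maximum of the exponents of `a`. -/
def Mx {q : ℕ} (a : Fin q → Fin q) : ℕ := Finset.univ.sup fun t => (a t : ℕ)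

lemma le_Mx {q : ℕ} (a : Fin q → Fin q) (t : Fin q) : (a t : ℕ) ≤ Mx a := by
  rw [Mx]
  exact Finset.le_sup (f := fun t : Fin q => (a t : ℕ)) (Finset.mem_univ t)

lemma Mx_lt {q : ℕ} (hq : 1 ≤ q) (a : Fin q → Fin q) : Mx a < q := by
  rw [Mx]
  exact (Finset.sup_lt_iff (by simp only [bot_eq_zero]; omega : (⊥ : ℕ) < q)).2 fun t _ => (a t).isLt

lemma exists_Mx {q : ℕ} (hq : 1 ≤ q) (a : Fin q → Fin q) : ∃ t, (a t : ℕ) = Mx a := by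
  haveI : Nonempty (Fin q) := ⟨⟨0, hq⟩⟩
  obtain ⟨t, _, h⟩ := Finset.exists_mem_eq_sup Finset.univ Finset.univ_nonempty
    (fun t => (a t : ℕ))
  exact ⟨t, h.symm⟩

lemma geom_le (q : ℕ) (A : ℕ) : (K q - 1) * ∑ j ∈ Finset.range A, K q ^ j ≤ K q ^ A := by
  have h1 : 1 ≤ K q := one_le_K q
  induction A with
  | zero => simp
  | succ A ih =>
    rw [Finset.sum_range_succ, Nat.mul_add]
    calc (K q - 1) * ∑ j ∈ Finset.range A, K q ^ j + (K q - 1) * K q ^ A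
        ≤ K q ^ A + (K q - 1) * K q ^ A := Nat.add_le_add_right ih _
      _ = (1 + (K q - 1)) * K q ^ A := by rw [Nat.add_mul, one_mul]
      _ = K q ^ (A + 1) := by
          have h2 : 1 + (K q - 1) = K q := by omega
          rw [h2, pow_succ, mul_comm]

lemma tau_eq {q : ℕ} {A : ℕ} (hA : A < q) :
    ∑ v : Fin q, K q ^ (min A (v : ℕ)) =
      (∑ j ∈ Finset.range A, K q ^ j) + (q - A) * K q ^ A := by
  rw [Fin.sum_univ_eq_sum_range (fun v => K q ^ (min A v)) q]
  rw [← Finset.sum_range_add_sum_Ico _ hA.le]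
  congr 1
  · exact Finset.sum_congr rfl fun j hj => by
      rw [min_eq_right (Finset.mem_range.1 hj).le]
  · rw [Finset.sum_congr rfl (fun j hj => by rw [min_eq_left (Finset.mem_Ico.1 hj).1]),
      Finset.sum_const, Nat.card_Ico, smul_eq_mul]

lemma key_tau {q : ℕ} (hq : 1 ≤ q) (a : Fin q → Fin q) (t : Fin q) :
    (K q - 1) * ∑ v : Fin q, K q ^ (min ((a t : ℕ)) (v : ℕ)) ≤
      K q ^ (a t : ℕ) + (K q - 1) * (q - Mx a) * K q ^ (a t : ℕ) + q * K q ^ (Mx a) := by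
  have h2 : 2 ≤ K q := two_le_K hq
  have hA : (a t : ℕ) < q := (a t).isLt
  rw [tau_eq hA, Nat.mul_add]
  have hAM : (a t : ℕ) ≤ Mx a := le_Mx a t
  have hMq : Mx a < q := Mx_lt hq a
  rw [add_assoc]
  apply Nat.add_le_add (geom_le q _)
  set A := (a t : ℕ) with hAdef
  have hsplit : q - A = (q - Mx a) + (Mx a - A) := by omega
  rw [hsplit]
  have expand : (K q - 1) * (((q - Mx a) + (Mx a - A)) * K q ^ A)
      = (K q - 1) * (q - Mx a) * K q ^ A + (K q - 1) * ((Mx a - A) * K q ^ A) := by ring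
  rw [expand]
  apply Nat.add_le_add_left
  rcases Nat.eq_or_lt_of_le hAM with heq | hlt
  · rw [← heq, Nat.sub_self]
    simp
  · have hKK : (K q - 1) * K q ^ A ≤ K q ^ (Mx a) := by
      calc (K q - 1) * K q ^ A ≤ K q * K q ^ A := Nat.mul_le_mul_right _ (by omega)
        _ = K q ^ (A + 1) := by rw [pow_succ, mul_comm]
        _ ≤ K q ^ (Mx a) := Kpow_mono q hlt
    calc (K q - 1) * ((Mx a - A) * K q ^ A) = (Mx a - A) * ((K q - 1) * K q ^ A) := by ring
      _ ≤ q * K q ^ (Mx a) := Nat.mul_le_mul (by omega) hKK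

lemma key_sum {q : ℕ} (hq : 1 ≤ q) (a : Fin q → Fin q) :
    ∑ t : Fin q, ∑ v : Fin q, K q ^ (min ((a t : ℕ)) ((v : ℕ))) ≤
      (q - Mx a + 1) * ∑ t : Fin q, K q ^ (a t : ℕ) := by
  have h2 : 2 ≤ K q := two_le_K hq
  set D := ∑ t : Fin q, K q ^ (a t : ℕ) with hD
  have hKM : K q ^ (Mx a) ≤ D := by
    obtain ⟨t0, ht0⟩ := exists_Mx hq a
    rw [← ht0]
    exact Finset.single_le_sum (f := fun t : Fin q => K q ^ (a t : ℕ))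
      (fun _ _ => Nat.zero_le _) (Finset.mem_univ t0)
  have hsum : (K q - 1) * ∑ t : Fin q, ∑ v : Fin q, K q ^ (min ((a t : ℕ)) (v : ℕ)) ≤
      (K q - 1) * ((q - Mx a + 1) * D) := by
    rw [Finset.mul_sum]
    calc ∑ t : Fin q, (K q - 1) * ∑ v : Fin q, K q ^ (min ((a t : ℕ)) (v : ℕ))
        ≤ ∑ t : Fin q, (K q ^ (a t : ℕ) + (K q - 1) * (q - Mx a) * K q ^ (a t : ℕ)
            + q * K q ^ (Mx a)) :=
          Finset.sum_le_sum fun t _ => key_tau hq a t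
      _ = D + (K q - 1) * (q - Mx a) * D + q * (q * K q ^ (Mx a)) := by
          rw [Finset.sum_add_distrib, Finset.sum_add_distrib, ← Finset.mul_sum,
            Finset.sum_const, Finset.card_univ, Fintype.card_fin, smul_eq_mul, ← hD]
      _ ≤ D + (K q - 1) * (q - Mx a) * D + q * (q * D) :=
          Nat.add_le_add_left (Nat.mul_le_mul_left _ (Nat.mul_le_mul_left _ hKM)) _
      _ ≤ (K q - 1) * ((q - Mx a + 1) * D) := by
          have hK1 : K q - 1 = 2 * q * q := by unfold K; omega
          rw [hK1]
          have hqq : (1 + q * q) * D ≤ (2 * q * q) * D :=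
            Nat.mul_le_mul_right D (by nlinarith)
          calc D + 2 * q * q * (q - Mx a) * D + q * (q * D)
              = 2 * q * q * (q - Mx a) * D + (1 + q * q) * D := by ring
            _ ≤ 2 * q * q * (q - Mx a) * D + 2 * q * q * D :=
                Nat.add_le_add_left hqq _
            _ = 2 * q * q * ((q - Mx a + 1) * D) := by ring
  exact Nat.le_of_mul_le_mul_left hsum (by omega)

lemma key_Num {q : ℕ} (hq : 1 ≤ q) (a : Fin q → Fin q) :
    ∑ b : Fin q → Fin q, (S q (a ⊓ b)).card ≤
      q ^ (q - 1) * ((q - Mx a + 1) * (S q a).card) := by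
  have h1 : ∑ b : Fin q → Fin q, (S q (a ⊓ b)).card
      = ∑ t : Fin q, ∑ b : Fin q → Fin q, K q ^ (min ((a t : ℕ)) ((b t : ℕ))) := by
    rw [Finset.sum_comm]
    apply Finset.sum_congr rfl
    intro b _
    rw [card_S]
    apply Finset.sum_congr rfl
    intro t _
    rw [Pi.inf_apply, coe_inf]
  have h2 : ∀ t : Fin q, ∑ b : Fin q → Fin q, K q ^ (min ((a t : ℕ)) ((b t : ℕ)))
      = q ^ (q - 1) * ∑ v : Fin q, K q ^ (min ((a t : ℕ)) ((v : ℕ))) := fun t =>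
    sum_pi_apply (fun v : Fin q => K q ^ (min ((a t : ℕ)) ((v : ℕ)))) t
  rw [h1, Finset.sum_congr rfl (fun t _ => h2 t), ← Finset.mul_sum, card_S]
  exact Nat.mul_le_mul_left _ (key_sum hq a)

/-! ### Counting the maxima -/

lemma count_fixed {q : ℕ} {k : ℕ} (hk : k < q) :
    (Finset.univ.filter fun a : Fin q → Fin q => Mx a ≤ k).card = (k + 1) ^ q := by
  classical
  have hset : (Finset.univ.filter fun a : Fin q → Fin q => Mx a ≤ k)
      = Fintype.piFinset fun _ : Fin q => Finset.univ.filter fun v : Fin q => (v : ℕ) ≤ k := by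
    ext a
    simp only [Finset.mem_filter, Finset.mem_univ, true_and, Fintype.mem_piFinset]
    rw [Mx, Finset.sup_le_iff]
    simp
  rw [hset, Fintype.card_piFinset]
  have hone : (Finset.univ.filter fun v : Fin q => (v : ℕ) ≤ k).card = k + 1 := by
    have heq : (Finset.univ.filter fun v : Fin q => (v : ℕ) ≤ k)
        = Finset.univ.filter fun v : Fin q => (v : ℕ) < k + 1 := by
      apply Finset.filter_congr
      intro v _
      simp [Nat.lt_succ_iff]
    rw [heq]
    exact card_filter_val_lt q (k + 1) hk
  rw [Finset.prod_congr rfl (fun _ _ => hone), Finset.prod_const, Finset.card_univ,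
    Fintype.card_fin]

lemma count_sum {q : ℕ} (hq : 1 ≤ q) :
    ∑ a : Fin q → Fin q, (q - Mx a) = ∑ k ∈ Finset.range q, (k + 1) ^ q := by
  have h1 : ∀ a : Fin q → Fin q, q - Mx a
      = ∑ k ∈ Finset.range q, if Mx a ≤ k then 1 else 0 := by
    intro a
    rw [← Finset.card_filter]
    have hIco : (Finset.range q).filter (fun k => Mx a ≤ k) = Finset.Ico (Mx a) q := by
      ext k
      simp only [Finset.mem_filter, Finset.mem_range, Finset.mem_Ico]
      tauto
    rw [hIco, Nat.card_Ico]
  rw [Finset.sum_congr rfl (fun a _ => h1 a), Finset.sum_comm]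
  apply Finset.sum_congr rfl
  intro k hk
  rw [← Finset.card_filter, count_fixed (Finset.mem_range.1 hk)]

lemma count_le {q : ℕ} (hq : 1 ≤ q) :
    ∑ a : Fin q → Fin q, (q - Mx a + 1) ≤ 3 * q ^ q := by
  rw [Finset.sum_add_distrib, Finset.sum_const, Finset.card_univ, Fintype.card_fun,
    Fintype.card_fin, smul_eq_mul, mul_one]
  rw [count_sum hq]
  have h2 : ∑ k ∈ Finset.range q, (k + 1) ^ q = (∑ j ∈ Finset.range q, j ^ q) + q ^ q := by
    have hs := Finset.sum_range_succ (fun j => j ^ q) q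
    have h3 := Finset.sum_range_succ' (fun j => j ^ q) q
    rw [hs] at h3
    have h0 : (0 : ℕ) ^ q = 0 := Nat.zero_pow (by omega)
    rw [h0, add_zero] at h3
    exact h3.symm
  rw [h2]
  have h4 : (q + 1) * ∑ j ∈ Finset.range q, j ^ q ≤ q ^ (q + 1) := sum_pow_le q q
  have h5 : q ^ (q + 1) ≤ (q + 1) * q ^ q := by
    rw [pow_succ, mul_comm]
    exact Nat.mul_le_mul_right _ (by omega)
  have h6 : ∑ j ∈ Finset.range q, j ^ q ≤ q ^ q :=
    Nat.le_of_mul_le_mul_left (h4.trans h5) (by omega)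
  omega

/-! ### The AOD bound for the family -/

lemma sum_deg {q : ℕ} (hq : 1 ≤ q) (a : Fin q → Fin q) :
    ∑ x ∈ S q a, ((Fam q).filter (fun A => x ∈ A)).card
      = ∑ b : Fin q → Fin q, (S q (a ⊓ b)).card := by
  classical
  have h1 : ∀ x : Fin q × Fin (K q ^ q), ((Fam q).filter (fun A => x ∈ A)).card
      = ∑ B ∈ Fam q, if x ∈ B then 1 else 0 := fun x => Finset.card_filter _ _
  rw [Finset.sum_congr rfl fun x _ => h1 x, Finset.sum_comm]
  rw [Fam, Finset.sum_image (fun b _ c _ h => S_injective hq h)]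
  apply Finset.sum_congr rfl
  intro b _
  rw [← Finset.card_filter, Finset.filter_mem_eq_inter, inter_S]

lemma AOD_Fam_le {q : ℕ} (hq : 1 ≤ q) : AOD (Fam q) ≤ 3 / (q : ℝ) := by
  classical
  have hqR : (0 : ℝ) < (q : ℝ) := by exact_mod_cast Nat.lt_of_lt_of_le Nat.zero_lt_one hq
  have hQq : (0 : ℝ) < (q : ℝ) ^ q := by positivity
  have herase : (Fam q).erase ∅ = Fam q := Finset.erase_eq_of_notMem (empty_not_mem_Fam hq)
  have habund : ∀ a : Fin q → Fin q, ∑ x ∈ S q a, abundance (Fam q) x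
      = ((∑ b : Fin q → Fin q, (S q (a ⊓ b)).card : ℕ) : ℝ) / (q : ℝ) ^ q := by
    intro a
    unfold abundance
    rw [← Finset.sum_div]
    have hnum : ∑ x ∈ S q a, (((Fam q).filter (fun A => x ∈ A)).card : ℝ)
        = ((∑ x ∈ S q a, ((Fam q).filter (fun A => x ∈ A)).card : ℕ) : ℝ) := by
      rw [Nat.cast_sum]
    rw [hnum, sum_deg hq a, card_Fam hq]
    push_cast
    ring
  have hbound : ∀ a : Fin q → Fin q,
      (1 / ((S q a).card : ℝ)) * (((∑ b : Fin q → Fin q, (S q (a ⊓ b)).card : ℕ) : ℝ)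
        / (q : ℝ) ^ q)
      ≤ ((q ^ (q - 1) * (q - Mx a + 1) : ℕ) : ℝ) / (q : ℝ) ^ q := by
    intro a
    have hDa : (0 : ℝ) < ((S q a).card : ℝ) := by
      exact_mod_cast (S_nonempty hq a).card_pos
    have hub : (((∑ b : Fin q → Fin q, (S q (a ⊓ b)).card : ℕ) : ℝ))
        ≤ ((q ^ (q - 1) * (q - Mx a + 1) : ℕ) : ℝ) * ((S q a).card : ℝ) := by
      have := key_Num hq a
      have h2 : (∑ b : Fin q → Fin q, (S q (a ⊓ b)).card : ℕ)
          ≤ (q ^ (q - 1) * (q - Mx a + 1)) * (S q a).card := by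
        calc (∑ b : Fin q → Fin q, (S q (a ⊓ b)).card : ℕ)
            ≤ q ^ (q - 1) * ((q - Mx a + 1) * (S q a).card) := this
          _ = (q ^ (q - 1) * (q - Mx a + 1)) * (S q a).card := by ring
      exact_mod_cast h2
    rw [one_div, inv_mul_eq_div, div_div, div_le_div_iff₀ (by positivity) hQq]
    calc ((∑ b : Fin q → Fin q, (S q (a ⊓ b)).card : ℕ) : ℝ) * (q : ℝ) ^ q
        ≤ (((q ^ (q - 1) * (q - Mx a + 1) : ℕ) : ℝ) * ((S q a).card : ℝ)) * (q : ℝ) ^ q := by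
          exact mul_le_mul_of_nonneg_right hub (le_of_lt hQq)
      _ = ((q ^ (q - 1) * (q - Mx a + 1) : ℕ) : ℝ) * ((q : ℝ) ^ q * ((S q a).card : ℝ)) := by
          ring
  have hsum3 : ∑ a : Fin q → Fin q, ((q ^ (q - 1) * (q - Mx a + 1) : ℕ) : ℝ)
      ≤ 3 * (q : ℝ) ^ (q - 1) * (q : ℝ) ^ q := by
    have hN : ∑ a : Fin q → Fin q, q ^ (q - 1) * (q - Mx a + 1)
        ≤ q ^ (q - 1) * (3 * q ^ q) := by
      rw [← Finset.mul_sum]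
      exact Nat.mul_le_mul_left _ (count_le hq)
    calc ∑ a : Fin q → Fin q, ((q ^ (q - 1) * (q - Mx a + 1) : ℕ) : ℝ)
        = ((∑ a : Fin q → Fin q, q ^ (q - 1) * (q - Mx a + 1) : ℕ) : ℝ) := by
          rw [Nat.cast_sum]
      _ ≤ ((q ^ (q - 1) * (3 * q ^ q) : ℕ) : ℝ) := by exact_mod_cast hN
      _ = 3 * (q : ℝ) ^ (q - 1) * (q : ℝ) ^ q := by push_cast; ring
  rw [AOD, herase, card_Fam hq]
  rw [Fam, Finset.sum_image (fun b _ c _ h => S_injective hq h)]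
  have hstep : ∑ a : Fin q → Fin q, (1 / ((S q a).card : ℝ)) *
      ∑ x ∈ S q a, abundance (Finset.univ.image (S q)) x
      ≤ 3 * (q : ℝ) ^ (q - 1) := by
    calc ∑ a : Fin q → Fin q, (1 / ((S q a).card : ℝ)) *
        ∑ x ∈ S q a, abundance (Finset.univ.image (S q)) x
        = ∑ a : Fin q → Fin q, (1 / ((S q a).card : ℝ)) *
            (((∑ b : Fin q → Fin q, (S q (a ⊓ b)).card : ℕ) : ℝ) / (q : ℝ) ^ q) := by
          apply Finset.sum_congr rfl
          intro a _
          rw [← Fam, habund a]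
      _ ≤ ∑ a : Fin q → Fin q, ((q ^ (q - 1) * (q - Mx a + 1) : ℕ) : ℝ) / (q : ℝ) ^ q :=
          Finset.sum_le_sum fun a _ => hbound a
      _ = (∑ a : Fin q → Fin q, ((q ^ (q - 1) * (q - Mx a + 1) : ℕ) : ℝ)) / (q : ℝ) ^ q := by
          rw [Finset.sum_div]
      _ ≤ (3 * (q : ℝ) ^ (q - 1) * (q : ℝ) ^ q) / (q : ℝ) ^ q := by
          gcongr
      _ = 3 * (q : ℝ) ^ (q - 1) := by field_simp
  have hfin : (1 / (((q ^ q : ℕ) : ℝ))) * (3 * (q : ℝ) ^ (q - 1)) = 3 / (q : ℝ) := by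
    have hqq : (q : ℝ) ^ q = (q : ℝ) ^ (q - 1) * (q : ℝ) := by
      have h1 : q - 1 + 1 = q := by omega
      rw [← pow_succ, h1]
    push_cast
    rw [hqq]
    field_simp
  calc (1 / (((q ^ q : ℕ) : ℝ))) * ∑ a : Fin q → Fin q, (1 / ((S q a).card : ℝ)) *
      ∑ x ∈ S q a, abundance (Finset.univ.image (S q)) x
      ≤ (1 / (((q ^ q : ℕ) : ℝ))) * (3 * (q : ℝ) ^ (q - 1)) := by
        apply mul_le_mul_of_nonneg_left hstep (by positivity)
    _ = 3 / (q : ℝ) := hfin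

lemma Fam_nonempty {q : ℕ} (hq : 1 ≤ q) : (Fam q).Nonempty :=
  ⟨S q (fun _ => ⟨0, hq⟩), Finset.mem_image_of_mem _ (Finset.mem_univ _)⟩

end AODConstruction

theorem exists_unionClosed_AOD_lt (c : ℝ) (hc : 0 < c) :
    ∃ n : ℕ, 0 < n ∧
      ∃ F : Finset (Finset (Fin n)), UnionClosed F ∧ F.Nonempty ∧ F ≠ {∅} ∧ AOD F < c := by
  obtain ⟨q, hq⟩ := exists_nat_gt (max 1 (3 / c))
  have hq1 : 1 ≤ q := by
    have h1 : (1 : ℝ) < q := lt_of_le_of_lt (le_max_left _ _) hq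
    exact_mod_cast h1.le
  have hqR : (0 : ℝ) < (q : ℝ) := by exact_mod_cast Nat.lt_of_lt_of_le Nat.zero_lt_one hq1
  have h3c : 3 / (q : ℝ) < c := by
    have h1 : 3 / c < q := lt_of_le_of_lt (le_max_right _ _) hq
    rw [div_lt_iff₀ hc] at h1
    rw [div_lt_iff₀ hqR]
    linarith [mul_comm (q : ℝ) c]
  refine ⟨q * AODConstruction.K q ^ q, ?_, ?_⟩
  · exact Nat.mul_pos (by omega) (Nat.pow_pos (AODConstruction.one_le_K q))
  · set e : Fin q × Fin (AODConstruction.K q ^ q) ≃ Fin (q * AODConstruction.K q ^ q) :=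
      finProdFinEquiv
    refine ⟨(AODConstruction.Fam q).image (Finset.map e.toEmbedding), ?_, ?_, ?_, ?_⟩
    · exact AODAux.unionClosed_image_map _ _ (AODConstruction.unionClosed_Fam q)
    · exact (AODConstruction.Fam_nonempty hq1).image _
    · intro hcontra
      have hmem : (∅ : Finset (Fin (q * AODConstruction.K q ^ q)))
          ∈ (AODConstruction.Fam q).image (Finset.map e.toEmbedding) := by
        rw [hcontra]; exact Finset.mem_singleton_self _
      obtain ⟨A, hA, hAe⟩ := Finset.mem_image.1 hmem
      rw [Finset.map_eq_empty] at hAe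
      rw [hAe] at hA
      exact AODConstruction.empty_not_mem_Fam hq1 hA
    · rw [AODAux.AOD_image_map]
      exact lt_of_le_of_lt (AODConstruction.AOD_Fam_le hq1) h3c
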